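/- Let d ≥ 2 and let A_{d+1} be the (d+1)×(d+1) row-stochastic matrix with 0 on the diagonal and 1/d in every off-diagonal entry. Suppose A_{d+1} has a quantum implementation in dimension d. Then the d×d identity matrix I_d and A_{d+1} are incompatible in C(Q_d): there is no row-stochastic matrix C with a quantum implementation in dimension d such that both I_d ⪯ C and A_{d+1} ⪯ C. -/

import Mathlib

open Matrix BigOperators
open scoped ComplexOrder

section helpers

variable {n : Type*} [Fintype n] [DecidableEq n]

/-- trace of `Aᴴ * A` vanishing forces `A = 0`. -/
lemma trace_conjTranspose_mul_self_eq_zero' {A : Matrix n n ℂ}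
    (h : (Aᴴ * A).trace = 0) : A = 0 := by
  have hdiag : ∀ j, (Aᴴ * A) j j = ((∑ i, Complex.normSq (A i j) : ℝ) : ℂ) := by
    intro j
    simp only [Matrix.mul_apply, Matrix.conjTranspose_apply]
    push_cast
    refine Finset.sum_congr rfl fun i _ => ?_
    rw [Complex.normSq_eq_conj_mul_self]
    rfl
  have h2 : ((∑ j, ∑ i, Complex.normSq (A i j) : ℝ) : ℂ) = 0 := by
    rw [← h, Matrix.trace]
    rw [Complex.ofReal_sum]
    exact Finset.sum_congr rfl fun j _ => (hdiag j).symm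
  have h3 : (∑ j, ∑ i, Complex.normSq (A i j) : ℝ) = 0 := by exact_mod_cast h2
  have h4 : ∀ j ∈ Finset.univ, ∀ i ∈ Finset.univ, Complex.normSq (A i j) = 0 := by
    intro j _ i _
    have := (Finset.sum_eq_zero_iff_of_nonneg (fun j _ =>
      Finset.sum_nonneg fun i _ => Complex.normSq_nonneg _)).mp h3 j (Finset.mem_univ j)
    exact (Finset.sum_eq_zero_iff_of_nonneg fun i _ => Complex.normSq_nonneg _).mp this i
      (Finset.mem_univ i)
  ext i j
  simpa using Complex.normSq_eq_zero.mp (h4 j (Finset.mem_univ j) i (Finset.mem_univ i))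

variable {n : Type*} [Fintype n] [DecidableEq n]

lemma psd_trace_nonneg {A : Matrix n n ℂ} (hA : A.PosSemidef) : 0 ≤ A.trace := by
  have h : ∀ i, 0 ≤ A i i := by
    intro i
    have := hA.dotProduct_mulVec_nonneg (Pi.single i 1)
    simpa [Matrix.mulVec_single, dotProduct, Pi.single_apply, Finset.sum_ite_eq] using this
  exact Finset.sum_nonneg fun i _ => h i

lemma posSemidef_exists_ct_mul {A : Matrix n n ℂ} (hA : A.PosSemidef) :
    ∃ B : Matrix n n ℂ, A = Bᴴ * B := by
  open scoped MatrixOrder in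
  exact CStarAlgebra.nonneg_iff_eq_star_mul_self.mp (Matrix.nonneg_iff_posSemidef.mpr hA)

lemma psd_trace_mul_nonneg {A B : Matrix n n ℂ} (hA : A.PosSemidef) (hB : B.PosSemidef) :
    0 ≤ (A * B).trace := by
  obtain ⟨C, hC⟩ := posSemidef_exists_ct_mul hB
  have : (A * B).trace = (C * A * Cᴴ).trace := by
    rw [hC, ← Matrix.trace_mul_cycle, mul_assoc]
  rw [this]
  exact psd_trace_nonneg (hA.mul_mul_conjTranspose_same C)

/-- trace of product of two PSD matrices is the complex coercion of its real part. -/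
lemma psd_trace_mul_eq_re {A B : Matrix n n ℂ} (hA : A.PosSemidef) (hB : B.PosSemidef) :
    (A * B).trace = (((A * B).trace.re : ℝ) : ℂ) := by
  have h := psd_trace_mul_nonneg hA hB
  rw [Complex.nonneg_iff] at h
  exact Complex.ext rfl (by simpa using h.2.symm)

lemma psd_mul_eq_zero_of_trace {A B : Matrix n n ℂ} (hA : A.PosSemidef) (hB : B.PosSemidef)
    (h : (A * B).trace = 0) : A * B = 0 := by
  obtain ⟨D, hD⟩ := posSemidef_exists_ct_mul hA
  obtain ⟨C, hC⟩ := posSemidef_exists_ct_mul hB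
  have key : ((D * Cᴴ)ᴴ * (D * Cᴴ)).trace = 0 := by
    have e : (D * Cᴴ)ᴴ * (D * Cᴴ) = C * A * Cᴴ := by
      rw [Matrix.conjTranspose_mul, Matrix.conjTranspose_conjTranspose, hD]
      noncomm_ring
    rw [e, Matrix.trace_mul_cycle (A := C) (B := A) (C := Cᴴ), ← hC, Matrix.trace_mul_comm, h]
  have hDC : D * Cᴴ = 0 := trace_conjTranspose_mul_self_eq_zero' key
  have : A * B = Dᴴ * (D * Cᴴ) * C := by rw [hD, hC]; noncomm_ring
  rw [this, hDC, Matrix.mul_zero, Matrix.zero_mul]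

lemma psd_real_smul {A : Matrix n n ℂ} (hA : A.PosSemidef) {r : ℝ} (hr : 0 ≤ r) :
    ((r : ℂ) • A).PosSemidef := by
  refine Matrix.PosSemidef.of_dotProduct_mulVec_nonneg ?_ ?_
  · unfold Matrix.IsHermitian
    rw [Matrix.conjTranspose_smul, hA.1.eq]
    congr 1
    simp [Complex.conj_ofReal]
  · intro x
    rw [Matrix.smul_mulVec, dotProduct_smul]
    have h0 : (0:ℂ) ≤ (r:ℂ) := by exact_mod_cast Complex.zero_le_real.mpr hr
    have := hA.dotProduct_mulVec_nonneg x
    rw [smul_eq_mul]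
    exact mul_nonneg h0 this

lemma psd_sum {m : Type*} [Fintype m] (f : m → Matrix n n ℂ)
    (hf : ∀ i, (f i).PosSemidef) : (∑ i, f i).PosSemidef := by
  classical
  refine Finset.sum_induction f _ (fun a b ha hb => ha.add hb) Matrix.PosSemidef.zero
    (fun i _ => hf i)

lemma one_sub_psd {σ : Matrix n n ℂ} (hσ : σ.PosSemidef) (htr : σ.trace = 1) :
    ((1 : Matrix n n ℂ) - σ).PosSemidef := by
  have hH : σ.IsHermitian := hσ.1
  set U : Matrix n n ℂ := (Matrix.IsHermitian.eigenvectorUnitary hH : Matrix n n ℂ) with hU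
  have hUU : (star U) * U = 1 := Unitary.coe_star_mul_self _
  have hUU' : U * (star U) = 1 := Unitary.coe_mul_star_self _
  have hspec := hH.spectral_theorem
  rw [Unitary.conjStarAlgAut_apply] at hspec
  have htr2 : ∑ i, hH.eigenvalues i = 1 := by
    have : σ.trace = (Matrix.diagonal (RCLike.ofReal ∘ hH.eigenvalues) : Matrix n n ℂ).trace := by
      conv_lhs => rw [hspec]
      rw [Matrix.trace_mul_cycle, Unitary.coe_star_mul_self, Matrix.one_mul]
    rw [htr, Matrix.trace_diagonal] at this
    have h2 : ((∑ i, hH.eigenvalues i : ℝ) : ℂ) = 1 := by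
      rw [Complex.ofReal_sum]; simpa using this.symm
    exact_mod_cast h2
  have heig : ∀ i, hH.eigenvalues i ≤ 1 := by
    intro i
    rw [← htr2]
    exact Finset.single_le_sum (fun j _ => hσ.eigenvalues_nonneg j) (Finset.mem_univ i)
  have hdiagpsd : (Matrix.diagonal (fun i => (1 : ℂ) - (hH.eigenvalues i : ℂ))).PosSemidef := by
    apply Matrix.PosSemidef.diagonal
    intro i
    have : (0:ℝ) ≤ 1 - hH.eigenvalues i := by linarith [heig i]
    have := Complex.zero_le_real.mpr this
    simpa using this
  have key : (1 : Matrix n n ℂ) - σ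
      = (star U)ᴴ * (Matrix.diagonal (fun i => (1 : ℂ) - (hH.eigenvalues i : ℂ))) * (star U) := by
    rw [Matrix.star_eq_conjTranspose, Matrix.conjTranspose_conjTranspose]
    have : Matrix.diagonal (fun i => (1 : ℂ) - (hH.eigenvalues i : ℂ))
        = 1 - Matrix.diagonal (RCLike.ofReal ∘ hH.eigenvalues) := by
      rw [← Matrix.diagonal_one, Matrix.diagonal_sub]
      rfl
    rw [this, Matrix.mul_sub, Matrix.sub_mul, Matrix.mul_one, ← Matrix.star_eq_conjTranspose, hUU']
    congr 1
  rw [key]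
  exact hdiagpsd.conjTranspose_mul_mul_same _

lemma pure_collapse {σ : Matrix n n ℂ} (hH : σ.IsHermitian) (hid : σ * σ = σ)
    (htr : σ.trace = 1) (X : Matrix n n ℂ) : σ * X * σ = (σ * X).trace • σ := by
  classical
  have hex : ∃ j, σ j j ≠ 0 := by
    by_contra hcon
    push_neg at hcon
    have : σ.trace = 0 := by
      rw [Matrix.trace]
      exact Finset.sum_eq_zero fun i _ => hcon i
    rw [htr] at this
    exact one_ne_zero this
  obtain ⟨j, hc⟩ := hex
  set c : ℂ := σ j j with hcdef
  have hmul : ∀ a b, ∑ m, σ a m * σ m b = σ a b := by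
    intro a b
    have := congrFun (congrFun hid a) b
    simpa [Matrix.mul_apply] using this
  have hconj : ∀ a b, (starRingEnd ℂ) (σ a b) = σ b a := by
    intro a b
    have := congrFun (congrFun hH.eq b) a
    rw [Matrix.conjTranspose_apply] at this
    exact this
  set K : Matrix n n ℂ := Matrix.of (fun a b => σ a j * σ j b) with hKdef
  have hKapp : ∀ a b, K a b = σ a j * σ j b := fun _ _ => rfl
  have hσK : σ * K = K := by
    ext a b
    rw [Matrix.mul_apply, hKapp]
    calc ∑ m, σ a m * K m b = (∑ m, σ a m * σ m j) * σ j b := by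
          rw [Finset.sum_mul]
          exact Finset.sum_congr rfl fun m _ => by rw [hKapp]; ring
    _ = σ a j * σ j b := by rw [hmul]
  have hKσ : K * σ = K := by
    ext a b
    rw [Matrix.mul_apply, hKapp]
    calc ∑ m, K a m * σ m b = σ a j * ∑ m, σ j m * σ m b := by
          rw [Finset.mul_sum]
          exact Finset.sum_congr rfl fun m _ => by rw [hKapp]; ring
    _ = σ a j * σ j b := by rw [hmul]
  have hKK : K * K = c • K := by
    ext a b
    rw [Matrix.mul_apply, Matrix.smul_apply, hKapp]
    calc ∑ m, K a m * K m b = (σ a j * σ j b) * ∑ m, σ j m * σ m j := by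
          rw [Finset.mul_sum]
          exact Finset.sum_congr rfl fun m _ => by rw [hKapp, hKapp]; ring
    _ = (σ a j * σ j b) * c := by rw [hmul, hcdef]
    _ = c • (σ a j * σ j b) := by rw [smul_eq_mul]; ring
  have htrK : K.trace = c := by
    rw [Matrix.trace]
    calc ∑ i, K.diag i = ∑ m, σ j m * σ m j := by
          refine Finset.sum_congr rfl fun i _ => ?_
          rw [Matrix.diag_apply, hKapp]; ring
    _ = c := by rw [hmul, hcdef]
  have hstarc : (starRingEnd ℂ) c = c := by rw [hcdef]; exact hconj j j
  have hKH : Kᴴ = K := by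
    ext a b
    rw [Matrix.conjTranspose_apply, hKapp, hKapp]
    rw [star_mul']
    rw [show (star (σ b j) : ℂ) = (starRingEnd ℂ) (σ b j) from rfl,
      show (star (σ j a) : ℂ) = (starRingEnd ℂ) (σ j a) from rfl, hconj, hconj]
    ring
  set Q : Matrix n n ℂ := σ - c⁻¹ • K with hQdef
  have hQ2 : Q * Q = Q := by
    simp only [hQdef, sub_mul, mul_sub, smul_mul_assoc, mul_smul_comm, hid, hσK, hKσ, hKK,
      smul_smul]
    rw [inv_mul_cancel₀ hc, one_smul, sub_self, smul_zero, sub_zero]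
  have hQH : Qᴴ = Q := by
    rw [hQdef, Matrix.conjTranspose_sub, Matrix.conjTranspose_smul, hKH, hH.eq, star_inv₀]
    rw [show (star c : ℂ) = c from hstarc]
  have htrQ : Q.trace = 0 := by
    rw [hQdef, Matrix.trace_sub, Matrix.trace_smul, htr, htrK, smul_eq_mul,
      inv_mul_cancel₀ hc, sub_self]
  have hQ0 : Q = 0 := by
    apply trace_conjTranspose_mul_self_eq_zero'
    rw [hQH, hQ2, htrQ]
  have hσc : σ = c⁻¹ • K := by
    have := sub_eq_zero.mp hQ0
    exact this
  have hKXK : K * X * K = ((K * X).trace) • K := by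
    have htrKX : (K * X).trace = ∑ m, ∑ r, σ j r * X r m * σ m j := by
      rw [Matrix.trace]
      refine Finset.sum_congr rfl fun m _ => ?_
      rw [Matrix.diag_apply, Matrix.mul_apply]
      refine Finset.sum_congr rfl fun r _ => ?_
      rw [hKapp]; ring
    ext a b
    rw [Matrix.mul_apply, Matrix.smul_apply, hKapp, htrKX, smul_eq_mul]
    calc ∑ m, (K * X) a m * K m b
        = ∑ m, ∑ r, (σ a j * σ j r) * X r m * (σ m j * σ j b) := by
          refine Finset.sum_congr rfl fun m _ => ?_
          rw [Matrix.mul_apply, Finset.sum_mul]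
          refine Finset.sum_congr rfl fun r _ => ?_
          simp only [hKapp]
    _ = (∑ m, ∑ r, σ j r * X r m * σ m j) * (σ a j * σ j b) := by
          rw [Finset.sum_mul]
          refine Finset.sum_congr rfl fun m _ => ?_
          rw [Finset.sum_mul]
          refine Finset.sum_congr rfl fun r _ => ?_
          ring
  have e2 : (σ * X).trace = c⁻¹ * (K * X).trace := by
    rw [hσc, smul_mul_assoc, Matrix.trace_smul, smul_eq_mul]
  calc σ * X * σ = (c⁻¹ • K) * X * (c⁻¹ • K) := by rw [← hσc]
  _ = (c⁻¹ * c⁻¹) • (K * X * K) := by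
      rw [smul_mul_assoc, smul_mul_assoc, mul_smul_comm, smul_smul]
  _ = (c⁻¹ * c⁻¹) • (((K * X).trace) • K) := by rw [hKXK]
  _ = (c⁻¹ * (K * X).trace) • (c⁻¹ • K) := by rw [smul_smul, smul_smul]; ring_nf
  _ = (σ * X).trace • σ := by rw [← hσc, ← e2]

end helpers

lemma mix_trace {p q dd : ℕ} (ρ : Fin p → Matrix (Fin dd) (Fin dd) ℂ)
    (M : Fin q → Matrix (Fin dd) (Fin dd) ℂ) (a : Fin p → ℝ) (b : Fin q → ℝ) :
    ((∑ k, ((a k : ℝ) : ℂ) • ρ k) * (∑ l, ((b l : ℝ) : ℂ) • M l)).trace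
      = ∑ k, ∑ l, ((a k * b l : ℝ) : ℂ) * ((ρ k) * (M l)).trace := by
  rw [Finset.sum_mul_sum, Matrix.trace_sum]
  refine Finset.sum_congr rfl fun k _ => ?_
  rw [Matrix.trace_sum]
  refine Finset.sum_congr rfl fun l _ => ?_
  rw [smul_mul_assoc, mul_smul_comm, smul_smul, Matrix.trace_smul, smul_eq_mul,
    Complex.ofReal_mul]

/-- A real matrix is row-stochastic if all entries are nonnegative
and each row sums to 1. -/
def RowStochastic {m n : ℕ} (A : Matrix (Fin m) (Fin n) ℝ) : Prop :=
  (∀ i j, 0 ≤ A i j) ∧ ∀ i, ∑ j, A i j = 1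

/-- `A` admits a quantum implementation in dimension `d`: there are states
`ρ i` (PSD, trace one) and POVM effects `M j` (PSD, summing to the identity)
with `A i j = Re (tr (ρ i * M j))`. -/
def QuantumImpl (d m n : ℕ) (A : Matrix (Fin m) (Fin n) ℝ) : Prop :=
  ∃ (ρ : Fin m → Matrix (Fin d) (Fin d) ℂ) (M : Fin n → Matrix (Fin d) (Fin d) ℂ),
    (∀ i, (ρ i).PosSemidef ∧ (ρ i).trace = 1) ∧
    (∀ j, (M j).PosSemidef) ∧ (∑ j, M j = 1) ∧
    (∀ i j, A i j = ((ρ i * M j).trace).re)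

/-- The max monotone `λmax(A) = Σ_j max_i A i j`. -/
noncomputable def lmax {m n : ℕ} (A : Matrix (Fin m) (Fin n) ℝ) : ℝ :=
  ∑ j, ⨆ i, A i j

/-- The min monotone `λmin(A) = −Σ_j min_i A i j`. -/
noncomputable def lmin {m n : ℕ} (A : Matrix (Fin m) (Fin n) ℝ) : ℝ :=
  - ∑ j, ⨅ i, A i j

/-- `UWMaj B A` : `B` is ultraweakly majorized by `A` (i.e. `B ⪯ A`),
meaning `B = L * A * R` for some row-stochastic `L`, `R`. -/
def UWMaj {m' n' m n : ℕ} (B : Matrix (Fin m') (Fin n') ℝ)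
    (A : Matrix (Fin m) (Fin n) ℝ) : Prop :=
  ∃ (L : Matrix (Fin m') (Fin m) ℝ) (R : Matrix (Fin n) (Fin n') ℝ),
    RowStochastic L ∧ RowStochastic R ∧ L * A * R = B

/-- `I_d` and the antidistinguishability matrix `A_{d+1}` are
incompatible in `C(Q_d)`: no quantum-implementable (in dimension `d`)
row-stochastic matrix `C` ultraweakly majorizes both. -/
theorem id_and_antidist_incompatible (d : ℕ) (hd : 2 ≤ d)
    (A : Matrix (Fin (d + 1)) (Fin (d + 1)) ℝ)
    (hAdef : ∀ i j, A i j = if i = j then 0 else 1 / (d : ℝ))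
    (hQA : QuantumImpl d (d + 1) (d + 1) A) :
    ¬ ∃ (p q : ℕ) (C : Matrix (Fin p) (Fin q) ℝ),
        RowStochastic C ∧ QuantumImpl d p q C ∧
        UWMaj (1 : Matrix (Fin d) (Fin d) ℝ) C ∧ UWMaj A C := by
  rintro ⟨p, q, C, hC, ⟨ρ, M, hρ, hM, hMsum, hCim⟩,
    ⟨L, R, hL, hR, hLCR⟩, ⟨L', R', hL', hR', hA'⟩⟩
  have hdR : (d : ℝ) ≠ 0 := Nat.cast_ne_zero.mpr (by omega)
  have htrC : ∀ k l, ((ρ k) * (M l)).trace = ((C k l : ℝ) : ℂ) := by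
    intro k l
    rw [psd_trace_mul_eq_re (hρ k).1 (hM l), ← hCim k l]
  set σ : Fin d → Matrix (Fin d) (Fin d) ℂ :=
    fun i => ∑ k, ((L i k : ℝ) : ℂ) • ρ k with hσdef
  set N : Fin d → Matrix (Fin d) (Fin d) ℂ :=
    fun j => ∑ l, ((R l j : ℝ) : ℂ) • M l with hNdef
  set τ : Fin (d+1) → Matrix (Fin d) (Fin d) ℂ :=
    fun i => ∑ k, ((L' i k : ℝ) : ℂ) • ρ k with hτdef
  -- trace identities
  have hmul3 : ∀ {m1 m2 : ℕ} (L₀ : Matrix (Fin m1) (Fin p) ℝ)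
      (R₀ : Matrix (Fin q) (Fin m2) ℝ) (i : Fin m1) (j : Fin m2),
      (L₀ * C * R₀) i j = ∑ k, ∑ l, (L₀ i k * R₀ l j) * C k l := by
    intro m1 m2 L₀ R₀ i j
    simp only [Matrix.mul_apply, Finset.sum_mul]
    rw [Finset.sum_comm]
    refine Finset.sum_congr rfl fun k _ => Finset.sum_congr rfl fun l _ => by ring
  have hgen : ∀ {m1 m2 : ℕ} (L₀ : Matrix (Fin m1) (Fin p) ℝ)
      (R₀ : Matrix (Fin q) (Fin m2) ℝ) (i : Fin m1) (j : Fin m2),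
      ((∑ k, ((L₀ i k : ℝ) : ℂ) • ρ k) * (∑ l, ((R₀ l j : ℝ) : ℂ) • M l)).trace
        = (((L₀ * C * R₀) i j : ℝ) : ℂ) := by
    intro m1 m2 L₀ R₀ i j
    rw [mix_trace ρ M (fun k => L₀ i k) (fun l => R₀ l j), hmul3]
    push_cast
    refine Finset.sum_congr rfl fun k _ => Finset.sum_congr rfl fun l _ => ?_
    rw [htrC]
  have hσN : ∀ i j, ((σ i) * (N j)).trace = if i = j then (1 : ℂ) else 0 := by
    intro i j
    rw [hσdef, hNdef]
    rw [hgen L R i j, hLCR]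
    by_cases h : i = j <;> simp [Matrix.one_apply, h]
  have hτM : ∀ i j, ((τ i) * (∑ l, ((R' l j : ℝ) : ℂ) • M l)).trace = ((A i j : ℝ) : ℂ) := by
    intro i j
    rw [hτdef, hgen L' R' i j, hA']
  -- PSD facts
  have hσpsd : ∀ i, (σ i).PosSemidef := fun i =>
    psd_sum _ (fun k => psd_real_smul (hρ k).1 (hL.1 i k))
  have hNpsd : ∀ j, (N j).PosSemidef := fun j =>
    psd_sum _ (fun l => psd_real_smul (hM l) (hR.1 l j))
  have hτpsd : ∀ i, (τ i).PosSemidef := fun i =>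
    psd_sum _ (fun k => psd_real_smul (hρ k).1 (hL'.1 i k))
  have hσtr : ∀ i, (σ i).trace = 1 := by
    intro i
    rw [hσdef]
    simp only [Matrix.trace_sum, Matrix.trace_smul, smul_eq_mul]
    have : ∀ k, ((L i k : ℝ) : ℂ) * (ρ k).trace = ((L i k : ℝ) : ℂ) := by
      intro k; rw [(hρ k).2, mul_one]
    rw [Finset.sum_congr rfl fun k _ => this k, ← Complex.ofReal_sum, hL.2 i,
      Complex.ofReal_one]
  have hNsum : ∑ j, N j = 1 := by
    rw [hNdef]
    rw [Finset.sum_comm]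
    have : ∀ l, ∑ j, ((R l j : ℝ) : ℂ) • M l = M l := by
      intro l
      rw [← Finset.sum_smul, ← Complex.ofReal_sum, hR.2 l, Complex.ofReal_one, one_smul]
    rw [Finset.sum_congr rfl fun l _ => this l, hMsum]
  -- Step A : products vanish for distinct indices
  have hzero : ∀ i j, i ≠ j → (σ i) * (N j) = 0 := by
    intro i j hij
    refine psd_mul_eq_zero_of_trace (hσpsd i) (hNpsd j) ?_
    rw [hσN i j, if_neg hij]
  have hzero' : ∀ i j, i ≠ j → (N j) * (σ i) = 0 := by
    intro i j hij
    have h := congrArg Matrix.conjTranspose (hzero i j hij)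
    rwa [Matrix.conjTranspose_mul, (hNpsd j).1.eq, (hσpsd i).1.eq,
      Matrix.conjTranspose_zero] at h
  -- Step B : σ i * N i = σ i
  have hσNi : ∀ i, σ i * N i = σ i := by
    intro i
    have h1 : σ i * (∑ j, N j) = σ i := by rw [hNsum, mul_one]
    rw [Matrix.mul_sum] at h1
    have h2 : ∑ j, σ i * N j = σ i * N i :=
      Finset.sum_eq_single_of_mem i (Finset.mem_univ i) fun j _ hji =>
        hzero i j (Ne.symm hji)
    exact h2.symm.trans h1
  -- Step C : N i = σ i
  have htrNge : ∀ i, 0 ≤ (N i).trace.re - 1 ∧ (N i).trace.im = 0 := by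
    intro i
    have hpsd1 := one_sub_psd (hσpsd i) (hσtr i)
    have h0 := psd_trace_mul_nonneg hpsd1 (hNpsd i)
    have he : ((1 - σ i) * N i).trace = (N i).trace - 1 := by
      rw [Matrix.sub_mul, Matrix.one_mul, Matrix.trace_sub]
      have : (σ i * N i).trace = 1 := by rw [hσN i i, if_pos rfl]
      rw [this]
    rw [he] at h0
    rw [Complex.nonneg_iff] at h0
    constructor
    · simpa using h0.1
    · have := h0.2
      simp only [Complex.sub_im, Complex.one_im, sub_zero] at this
      exact this.symm
  have htrNsum : ∑ i, ((N i).trace.re - 1) = 0 := by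
    have h1 : (∑ i, N i).trace = (d : ℂ) := by
      rw [hNsum, Matrix.trace_one]
      simp
    rw [Matrix.trace_sum] at h1
    have h2 : (∑ i, (N i).trace).re = (d : ℝ) := by rw [h1]; simp
    rw [Complex.re_sum] at h2
    rw [Finset.sum_sub_distrib, h2]
    simp
  have htrN : ∀ i, (N i).trace = 1 := by
    intro i
    have := (Finset.sum_eq_zero_iff_of_nonneg
      (fun i _ => (htrNge i).1)).mp htrNsum i (Finset.mem_univ i)
    have hre : (N i).trace.re = 1 := by linarith [this]
    exact Complex.ext (by simpa using hre) (by simpa using (htrNge i).2)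
  have hNeq : ∀ i, N i = σ i := by
    intro i
    have hpsd1 := one_sub_psd (hσpsd i) (hσtr i)
    have hz : ((1 - σ i) * N i).trace = 0 := by
      rw [Matrix.sub_mul, Matrix.one_mul, Matrix.trace_sub]
      have h2 : (σ i * N i).trace = 1 := by rw [hσN i i, if_pos rfl]
      rw [h2, htrN i, sub_self]
    have := psd_mul_eq_zero_of_trace hpsd1 (hNpsd i) hz
    rw [Matrix.sub_mul, Matrix.one_mul, sub_eq_zero] at this
    rw [this, hσNi i]
  -- Step D,E
  have hσsum : ∑ i, σ i = 1 := by
    rw [← hNsum]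
    exact Finset.sum_congr rfl fun i _ => (hNeq i).symm
  have hidem : ∀ i, σ i * σ i = σ i := by
    intro i
    have h := hσNi i
    rwa [hNeq i] at h
  -- Step F : choose for each l an index t l with R l (t l) > 0
  have htex : ∀ l : Fin q, ∃ j, 0 < R l j := by
    intro l
    have hne : ∑ j, R l j ≠ 0 := by rw [hR.2 l]; exact one_ne_zero
    obtain ⟨j, _, hj⟩ := Finset.exists_ne_zero_of_sum_ne_zero hne
    exact ⟨j, lt_of_le_of_ne (hR.1 l j) (Ne.symm hj)⟩
  choose t ht using htex
  -- Step G : σ i * M l = 0 whenever i ≠ t l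
  have hexp : ∀ (i : Fin d) (j : Fin d),
      ((σ i) * (N j)).trace = ((∑ l, R l j * ((σ i * M l).trace).re : ℝ) : ℂ) := by
    intro i j
    rw [hNdef]
    rw [Matrix.mul_sum, Matrix.trace_sum, Complex.ofReal_sum]
    refine Finset.sum_congr rfl fun l _ => ?_
    rw [mul_smul_comm, Matrix.trace_smul, smul_eq_mul, Complex.ofReal_mul]
    rw [← psd_trace_mul_eq_re (hσpsd i) (hM l)]
  have hσM : ∀ (l : Fin q) (i : Fin d), i ≠ t l → (σ i) * (M l) = 0 := by
    intro l i hitl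
    have h0 : ((σ i) * (N (t l))).trace = 0 := by rw [hσN i (t l), if_neg hitl]
    rw [hexp i (t l)] at h0
    have hreal : (∑ l', R l' (t l) * ((σ i * M l').trace).re : ℝ) = 0 := by
      exact_mod_cast h0
    have hnn : ∀ l' : Fin q, 0 ≤ R l' (t l) * ((σ i * M l').trace).re := by
      intro l'
      refine mul_nonneg (hR.1 l' (t l)) ?_
      have := psd_trace_mul_nonneg (hσpsd i) (hM l')
      exact (Complex.nonneg_iff.mp this).1
    have hterm := (Finset.sum_eq_zero_iff_of_nonneg (fun l' _ => hnn l')).mp hreal l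
      (Finset.mem_univ l)
    have hretr : ((σ i * M l).trace).re = 0 := by
      rcases mul_eq_zero.mp hterm with h | h
      · exact absurd h (ne_of_gt (ht l))
      · exact h
    refine psd_mul_eq_zero_of_trace (hσpsd i) (hM l) ?_
    rw [psd_trace_mul_eq_re (hσpsd i) (hM l), hretr, Complex.ofReal_zero]
  have hMσ : ∀ (l : Fin q) (i : Fin d), i ≠ t l → (M l) * (σ i) = 0 := by
    intro l i hitl
    have h := congrArg Matrix.conjTranspose (hσM l i hitl)
    rwa [Matrix.conjTranspose_mul, (hσpsd i).1.eq, (hM l).1.eq,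
      Matrix.conjTranspose_zero] at h
  -- Step H : each M l is a multiple of σ (t l)
  set cc : Fin q → ℝ := fun l => ((σ (t l) * M l).trace).re with hccdef
  have hMform : ∀ l, M l = ((cc l : ℝ) : ℂ) • σ (t l) := by
    intro l
    have h1 : M l = σ (t l) * M l := by
      have hs : (∑ i, σ i) * M l = σ (t l) * M l := by
        rw [Finset.sum_mul]
        exact Finset.sum_eq_single_of_mem (t l) (Finset.mem_univ _)
          fun i _ hi => hσM l i hi
      rw [← hs, hσsum, Matrix.one_mul]
    have h2 : M l = M l * σ (t l) := by
      have hs : M l * (∑ i, σ i) = M l * σ (t l) := by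
        rw [Matrix.mul_sum]
        exact Finset.sum_eq_single_of_mem (t l) (Finset.mem_univ _)
          fun i _ hi => hMσ l i hi
      rw [← hs, hσsum, Matrix.mul_one]
    have h3 : M l = σ (t l) * M l * σ (t l) := by
      conv_lhs => rw [h1, h2]
      rw [Matrix.mul_assoc]
    rw [h3, pure_collapse (hσpsd (t l)).1 (hidem (t l)) (hσtr (t l)) (M l)]
    rw [psd_trace_mul_eq_re (hσpsd (t l)) (hM l)]
  -- Step I : factor A through dimension d
  set U : Matrix (Fin (d+1)) (Fin d) ℝ :=
    Matrix.of (fun i s => ((τ i * σ s).trace).re) with hUdef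
  set V : Matrix (Fin d) (Fin (d+1)) ℝ :=
    Matrix.of (fun s j => ∑ l, if t l = s then R' l j * cc l else 0) with hVdef
  have hfact : A = U * V := by
    ext i j
    have h1 : ((A i j : ℝ) : ℂ) = ((τ i) * (∑ l, ((R' l j : ℝ) : ℂ) • M l)).trace :=
      (hτM i j).symm
    have h2 : ((τ i) * (∑ l, ((R' l j : ℝ) : ℂ) • M l)).trace
        = ((∑ l, R' l j * cc l * ((τ i * σ (t l)).trace).re : ℝ) : ℂ) := by
      rw [Matrix.mul_sum, Matrix.trace_sum, Complex.ofReal_sum]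
      refine Finset.sum_congr rfl fun l _ => ?_
      rw [mul_smul_comm, Matrix.trace_smul, smul_eq_mul]
      conv_lhs => rw [hMform l]
      rw [mul_smul_comm, Matrix.trace_smul, smul_eq_mul]
      rw [psd_trace_mul_eq_re (hτpsd i) (hσpsd (t l))]
      push_cast [Complex.ofReal_re]
      ring
    have h3 : A i j = ∑ l, R' l j * cc l * ((τ i * σ (t l)).trace).re := by
      have h := h1.trans h2
      exact_mod_cast h
    calc A i j = ∑ l, R' l j * cc l * ((τ i * σ (t l)).trace).re := h3
    _ = ∑ l, ∑ s, (if t l = s then U i s * (R' l j * cc l) else 0) := by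
        refine Finset.sum_congr rfl fun l _ => ?_
        rw [Finset.sum_ite_eq]
        simp only [Finset.mem_univ, if_true, hUdef, Matrix.of_apply]
        ring
    _ = ∑ s, ∑ l, (if t l = s then U i s * (R' l j * cc l) else 0) := Finset.sum_comm
    _ = (U * V) i j := by
        rw [Matrix.mul_apply]
        refine Finset.sum_congr rfl fun s _ => ?_
        rw [hVdef]
        simp only [Matrix.of_apply]
        rw [Finset.mul_sum]
        refine Finset.sum_congr rfl fun l _ => ?_
        by_cases h : t l = s <;> simp [h]
  -- Step J : rank contradiction
  set B : Matrix (Fin (d+1)) (Fin (d+1)) ℝ :=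
    Matrix.of (fun k j => if k = j then 1 - (d : ℝ) else 1) with hBdef
  have hAB : A * B = 1 := by
    ext i j
    rw [Matrix.mul_apply, Matrix.one_apply]
    have hterm : ∀ k, A i k * B k j
        = (1 / (d : ℝ)) * B k j - (if i = k then (1 / (d : ℝ)) * B k j else 0) := by
      intro k
      rw [hAdef]
      by_cases h : i = k <;> simp [h]
    rw [Finset.sum_congr rfl fun k _ => hterm k, Finset.sum_sub_distrib, Finset.sum_ite_eq]
    simp only [Finset.mem_univ, if_true]
    rw [← Finset.mul_sum]
    have hBcol : ∑ k, B k j = 1 := by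
      have hb : ∀ k : Fin (d+1), B k j = 1 + (if k = j then -(d : ℝ) else 0) := by
        intro k
        rw [hBdef]
        by_cases h : k = j <;> simp [h]
        ring
      rw [Finset.sum_congr rfl fun k _ => hb k, Finset.sum_add_distrib, Finset.sum_ite_eq']
      simp [Finset.card_univ]
    rw [hBcol, mul_one]
    by_cases h : i = j
    · subst h
      rw [if_pos rfl]
      have : B i i = 1 - (d : ℝ) := by rw [hBdef]; simp
      rw [this]
      field_simp
      ring
    · rw [if_neg h]
      have : B i j = 1 := by rw [hBdef]; simp [h]
      rw [this, mul_one, sub_self]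
  have h1 : ((1 : Matrix (Fin (d+1)) (Fin (d+1)) ℝ)).rank = d + 1 := by
    rw [Matrix.rank_one]
    simp
  have h2 : (A * B).rank ≤ A.rank := Matrix.rank_mul_le_left A B
  have h3 : A.rank ≤ d := by
    rw [hfact]
    exact le_trans (Matrix.rank_mul_le_left U V) (by simpa using Matrix.rank_le_card_width U)
  rw [hAB, h1] at h2
  omega
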